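/- The complex number (1 + 2√2·i)/3 is not a root of unity. -/
import Mathlib

open Complex

private def fseq : ℕ → ℤ × ℤ
  | 0 => (1, 0)
  | n+1 => ((fseq n).1 - 4 * (fseq n).2, 2 * (fseq n).1 + (fseq n).2)

private lemma fseq_pow (n : ℕ) :
    (1 + 2 * Real.sqrt 2 * I) ^ n
      = ((fseq n).1 : ℂ) + ((fseq n).2 : ℂ) * (Real.sqrt 2 * I) := by
  induction n with
  | zero => simp [fseq]
  | succ n ih =>
    have hs : (Real.sqrt 2 : ℂ) ^ 2 = 2 := by
      rw [← ofReal_pow]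
      norm_num [Real.sq_sqrt]
    have hI : (I : ℂ) ^ 2 = -1 := I_sq
    rw [pow_succ, ih, fseq]
    push_cast
    linear_combination (2 * ((fseq n).2 : ℂ) * I ^ 2) * hs + (4 * ((fseq n).2 : ℂ)) * hI

private lemma fseq_mod (n : ℕ) (hn : 0 < n) :
    ((fseq n).1 : ZMod 3) ≠ 0 ∧ ((fseq n).2 : ZMod 3) = -((fseq n).1 : ZMod 3) := by
  induction n with
  | zero => exact absurd hn (by simp)
  | succ n ih =>
    cases n with
    | zero => constructor <;> decide
    | succ m =>
      obtain ⟨h1, h2⟩ := ih (by omega)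
      have e : fseq (m+1+1)
          = ((fseq (m+1)).1 - 4 * (fseq (m+1)).2, 2 * (fseq (m+1)).1 + (fseq (m+1)).2) := rfl
      rw [e]
      set a := ((fseq (m+1)).1 : ZMod 3) with ha
      have six : (6 : ZMod 3) = 0 := by decide
      push_cast
      rw [h2, ← ha]
      have e1 : a - 4 * -a = -a := by linear_combination a * six
      rw [e1]
      exact ⟨neg_ne_zero.mpr h1, by ring⟩

open Complex in
theorem not_root_of_unity_one_add_two_sqrt_two_I_div_three :
    ∀ n : ℕ, 0 < n → ((1 + 2 * Real.sqrt 2 * I) / 3) ^ n ≠ 1 := by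
  intro n hn h
  rw [div_pow, div_eq_one_iff_eq (pow_ne_zero _ (by norm_num))] at h
  rw [fseq_pow] at h
  rw [show ((3:ℂ)^n) = ((3^n : ℝ) : ℂ) by push_cast; ring] at h
  have h3 : ((fseq n).2 : ℝ) * Real.sqrt 2 = 0 := by
    have := congrArg Complex.im h
    simp only [add_im, mul_im, mul_re, intCast_im, intCast_re, ofReal_im, ofReal_re,
      I_re, I_im] at this
    linarith
  have hb : (fseq n).2 = 0 := by
    rcases mul_eq_zero.mp h3 with h' | h'
    · exact_mod_cast h'
    · exact absurd h' (by positivity)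
  obtain ⟨h1, h2⟩ := fseq_mod n hn
  rw [hb] at h2
  exact h1 (neg_eq_zero.mp (by exact_mod_cast h2.symm))
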